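/- In a one-step MDP with goal interference, the GCSL iteration fails to preserve optimality: if π_{t-1} is an optimal goal-conditioned policy and there exist goals g, g' with p(g') > 0 and p(s=g | a_*(g)) > p(s=g | a_*(g')) > 0, then the distilled policy π_t(a|g) ∝ p(s=g|a)·Σ_{g''} p(g'')π_{t-1}(a|g'') assigns positive probability to the suboptimal action a_*(g'), i.e., π_t(a_*(g')|g) / π_t(a_*(g)|g) ≥ p(s=g|a_*(g'))·p(g') / p(s=g|a_*(g)) > 0. -/
import Mathlib


/-- GCSL fails to preserve optimality under goal interference: starting from the
optimal deterministic policy `πprev`, the GCSL-updated policy `πt` satisfies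
`πt(a_*(g')|g) / πt(a_*(g)|g) ≥ p(s=g|a_*(g'))·p(g') / p(s=g|a_*(g)) > 0`. -/
theorem stmt_3 (A Goal : Type*) [Fintype A] [Fintype Goal] [DecidableEq A]
    (p : Goal → ℝ) (hp0 : ∀ g, 0 ≤ p g) (hp1 : ∑ g, p g = 1)
    (d : Goal → A → ℝ) (hd0 : ∀ g a, 0 ≤ d g a)
    (astar : Goal → A) (hastar : ∀ g a, d g a ≤ d g (astar g))
    -- the optimal deterministic previous policy
    (πprev : A → Goal → ℝ) (hπprev : ∀ a g, πprev a g = if a = astar g then 1 else 0)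
    -- marginal action distribution and GCSL update
    (m : A → ℝ) (hm : ∀ a, m a = ∑ g'', p g'' * πprev a g'')
    (πt : A → Goal → ℝ)
    (hπt : ∀ a g, πt a g = d g a * m a / ∑ a', d g a' * m a')
    -- goal interference
    (g g' : Goal) (hgg' : g ≠ g') (hpg : 0 < p g) (hpg' : 0 < p g')
    (hinter1 : d g (astar g') < d g (astar g)) (hinter2 : 0 < d g (astar g'))
    (hane : astar g ≠ astar g') :
    d g (astar g') * p g' / d g (astar g) ≤ πt (astar g') g / πt (astar g) g ∧
      0 < d g (astar g') * p g' / d g (astar g) := by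
  have hdg : 0 < d g (astar g) := lt_trans hinter2 hinter1
  have hm0 : ∀ a, 0 ≤ m a := by
    intro a
    rw [hm]
    refine Finset.sum_nonneg fun g'' _ => mul_nonneg (hp0 g'') ?_
    rw [hπprev]; split <;> norm_num
  have hmle : ∀ a, m a ≤ 1 := by
    intro a
    rw [hm, ← hp1]
    refine Finset.sum_le_sum fun g'' _ => ?_
    rw [hπprev]
    split
    · simp
    · simp [hp0 g'']
  have hmge : ∀ h : Goal, p h ≤ m (astar h) := by
    intro h
    rw [hm]
    calc p h = p h * πprev (astar h) h := by rw [hπprev]; simp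
    _ ≤ ∑ g'', p g'' * πprev (astar h) g'' := by
        refine Finset.single_le_sum (f := fun g'' => p g'' * πprev (astar h) g'') ?_ (Finset.mem_univ h)
        intro i _
        refine mul_nonneg (hp0 i) ?_
        rw [hπprev]; split <;> norm_num
  have hm1 : 0 < m (astar g) := lt_of_lt_of_le hpg (hmge g)
  have hm2 : 0 < m (astar g') := lt_of_lt_of_le hpg' (hmge g')
  have hS : 0 < ∑ a', d g a' * m a' := by
    refine Finset.sum_pos' (fun a _ => mul_nonneg (hd0 g a) (hm0 a)) ⟨astar g', Finset.mem_univ _, mul_pos hinter2 hm2⟩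
  have hratio : πt (astar g') g / πt (astar g) g
      = (d g (astar g') * m (astar g')) / (d g (astar g) * m (astar g)) := by
    rw [hπt, hπt]; rw [div_div_div_eq]; rw [mul_comm (d g (astar g') * m (astar g')) _, mul_div_mul_left _ _ (ne_of_gt hS)]
  constructor
  · rw [hratio]
    refine div_le_div₀ (mul_nonneg (hd0 _ _) (hm0 _)) ?_ (mul_pos hdg hm1) ?_
    · exact mul_le_mul_of_nonneg_left (hmge g') (le_of_lt hinter2)
    · calc d g (astar g) * m (astar g) ≤ d g (astar g) * 1 :=
        mul_le_mul_of_nonneg_left (hmle _) (le_of_lt hdg)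
      _ = d g (astar g) := mul_one _
  · positivity
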